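/- Soundness of fei: Let TS1, TS2 be labeled transition systems with initial states I1, I2 and let φ ⊆ E1 × E2 be a relation on events. Define feiF_φ(R) = { (s1,s2) | for all e1, s1' with s1 ⇝^{e1} s1', there exist e2, s2' with s2 ⇝^{e2} s2', (e1,e2) ∈ φ, and (s1',s2') ∈ R }, and fei_φ = ν.feiF_φ. If (I1, I2) ∈ fei_φ, then for every trace τ1 of TS1 there exists a trace τ2 of TS2 such that (τ1[i], τ2[i]) ∈ φ for all i ∈ ℕ. -/
import Mathlib

/-- A labeled transition system: states, optional-event-labeled steps, an initial state. -/
structure LTS (S E : Type*) where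
  init : S
  step : S → Option E → S → Prop

namespace LTS

/-- Silent transition. -/
def Silent {S E : Type*} (T : LTS S E) (s s' : S) : Prop := T.step s none s'

/-- `Obs T s e s'`: finitely many silent steps followed by an `e`-labeled step. -/
def Obs {S E : Type*} (T : LTS S E) (s : S) (e : E) (s' : S) : Prop :=
  ∃ s'', Relation.ReflTransGen T.Silent s s'' ∧ T.step s'' (some e) s'

/-- `τ` is an (infinite) trace originating from state `s`. -/
def IsTraceFrom {S E : Type*} (T : LTS S E) (s : S) (τ : ℕ → E) : Prop :=
  ∃ π : ℕ → S, π 0 = s ∧ ∀ i, T.Obs (π i) (τ i) (π (i + 1))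

end LTS

/-- Greatest fixed point of an operator on subsets. -/
def nuSet {A : Type*} (F : Set A → Set A) : Set A := ⋃₀ {R | R ⊆ F R}

/-- The ∀∃-invariant functor. -/
def feiF {S1 S2 E1 E2 : Type*} (T1 : LTS S1 E1) (T2 : LTS S2 E2) (φ : Set (E1 × E2))
    (R : Set (S1 × S2)) : Set (S1 × S2) :=
  {p | ∀ e1 s1', T1.Obs p.1 e1 s1' →
        ∃ e2 s2', T2.Obs p.2 e2 s2' ∧ (e1, e2) ∈ φ ∧ (s1', s2') ∈ R}

theorem fei_sound {S1 S2 E1 E2 : Type*} (T1 : LTS S1 E1) (T2 : LTS S2 E2)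
    (φ : Set (E1 × E2)) (h : (T1.init, T2.init) ∈ nuSet (feiF T1 T2 φ)) :
    ∀ τ1 : ℕ → E1, T1.IsTraceFrom T1.init τ1 →
      ∃ τ2 : ℕ → E2, T2.IsTraceFrom T2.init τ2 ∧ ∀ i, (τ1 i, τ2 i) ∈ φ := by
  classical
  intro τ1 ht
  set Nset := nuSet (feiF T1 T2 φ) with hNdef
  have hpost : Nset ⊆ feiF T1 T2 φ Nset := by
    intro p hp
    obtain ⟨R, hR, hpR⟩ := hp
    intro e1 s1' ho
    obtain ⟨e2, s2', h1, h2, h3⟩ := hR hpR e1 s1' ho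
    exact ⟨e2, s2', h1, h2, ⟨R, hR, h3⟩⟩
  obtain ⟨π, hπ0, hπ⟩ := ht
  have key : ∀ i (s2 : S2), (π i, s2) ∈ Nset →
      ∃ e2 s2', T2.Obs s2 e2 s2' ∧ (τ1 i, e2) ∈ φ ∧ (π (i+1), s2') ∈ Nset :=
    fun i s2 hmem => hpost hmem (τ1 i) (π (i+1)) (hπ i)
  choose e2f s2f hObs hφ hN using key
  have h0 : (π 0, T2.init) ∈ Nset := by rw [hπ0]; exact h
  let seq : ∀ i : ℕ, {s : S2 // (π i, s) ∈ Nset} := fun i =>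
    Nat.rec ⟨T2.init, h0⟩ (fun n ih => ⟨s2f n ih.1 ih.2, hN n ih.1 ih.2⟩) i
  refine ⟨fun i => e2f i (seq i).1 (seq i).2,
    ⟨fun i => (seq i).1, rfl, fun i => ?_⟩, fun i => hφ i (seq i).1 (seq i).2⟩
  exact hObs i (seq i).1 (seq i).2
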